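/- Weighted Ladyzhenskaya-type inequality: let F : ℝ → [0,∞) be bounded, even, and nondecreasing on [0,∞), and let φ : ℝ → ℂ be continuously differentiable with φ and φ′ square-integrable and φ(x) → 0 as |x| → ∞ (for instance φ Schwartz). Then for every x ∈ ℝ: F(x)² |φ(x)|² ≤ 2 ‖F·φ′‖_{L²(ℝ)} · ‖F·φ‖_{L²(ℝ)}. In particular sup_x F(x)²|φ(x)|² ≤ 2 ‖F∂_xφ‖_{L²} ‖Fφ‖_{L²}. -/

import Mathlib

open MeasureTheory Real Complex Filter Topology

/-- The `L²(ℝ)` norm of a complex-valued function. -/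
noncomputable def L2norm (f : ℝ → ℂ) : ℝ := Real.sqrt (∫ x : ℝ, ‖f x‖ ^ 2)

/-- weighted Ladyzhenskaya-type inequality. Let `F : ℝ → [0,∞)`
be bounded, even, and nondecreasing on `[0,∞)`, and let `φ : ℝ → ℂ` be `C¹` with
`φ, φ′ ∈ L²` and `φ(x) → 0` as `|x| → ∞`. Then for every `x`,
`F(x)² |φ(x)|² ≤ 2 ‖F φ′‖_{L²} ‖F φ‖_{L²}`, and in particular the same bound
holds for `sup_x F(x)²|φ(x)|²`. -/
theorem weighted_Ladyzhenskaya
    (F : ℝ → ℝ) (hFnonneg : ∀ x, 0 ≤ F x) (hFbdd : ∃ M : ℝ, ∀ x, F x ≤ M)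
    (hFeven : ∀ x, F (-x) = F x) (hFmono : MonotoneOn F (Set.Ici (0:ℝ)))
    (φ : ℝ → ℂ) (hφ : ContDiff ℝ 1 φ)
    (hφL2 : MemLp φ 2 (volume : Measure ℝ))
    (hφ'L2 : MemLp (deriv φ) 2 (volume : Measure ℝ))
    (hφ0 : Tendsto (fun x : ℝ => φ x) (cocompact ℝ) (nhds 0)) :
    (∀ x : ℝ, F x ^ 2 * ‖φ x‖ ^ 2 ≤
      2 * L2norm (fun y => (F y : ℂ) * deriv φ y) * L2norm (fun y => (F y : ℂ) * φ y)) ∧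
    (⨆ x : ℝ, F x ^ 2 * ‖φ x‖ ^ 2) ≤
      2 * L2norm (fun y => (F y : ℂ) * deriv φ y) * L2norm (fun y => (F y : ℂ) * φ y) := by
  obtain ⟨M, hM⟩ := hFbdd
  -- measurability of F
  have hFmeas : Measurable F := by
    have hGmono : Monotone (fun y : ℝ => F (max y 0)) := fun a b hab =>
      hFmono (le_max_right a 0) (le_max_right b 0) (max_le_max hab le_rfl)
    have hFeq : F = (fun y : ℝ => F (max y 0)) ∘ (fun x : ℝ => |x|) := by
      funext x
      show F x = F (max |x| 0)
      rcases le_or_gt 0 x with h | h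
      · rw [_root_.abs_of_nonneg h, max_eq_left h]
      · rw [_root_.abs_of_neg h, max_eq_left (neg_nonneg.2 h.le), hFeven]
    rw [hFeq]
    exact hGmono.measurable.comp measurable_abs
  -- basic facts about φ
  have hφc : Continuous φ := hφ.continuous
  have hφ'c : Continuous (deriv φ) := hφ.continuous_deriv le_rfl
  have hd : ∀ x : ℝ, HasDerivAt φ (deriv φ x) x := fun x =>
    ((hφ.differentiable one_ne_zero) x).hasDerivAt
  -- the function g = ‖φ‖² and its derivative
  set g : ℝ → ℝ := fun x => ‖φ x‖ ^ 2 with hgdef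
  set g' : ℝ → ℝ := fun x => 2 * (inner ℝ (φ x) (deriv φ x) : ℝ) with hg'def
  have hg : ∀ x : ℝ, HasDerivAt g (g' x) x := fun x => (hd x).norm_sq
  have hg'c : Continuous g' :=
    continuous_const.mul (hφc.inner hφ'c)
  -- the dominating function D
  set D : ℝ → ℝ := fun y => 2 * (‖φ y‖ * ‖deriv φ y‖) with hDdef
  have hDnonneg : ∀ y, 0 ≤ D y := fun y => by positivity
  have hg'le : ∀ y, |g' y| ≤ D y := by
    intro y
    have := abs_real_inner_le_norm (φ y) (deriv φ y)
    calc |g' y| = 2 * |(inner ℝ (φ y) (deriv φ y) : ℝ)| := by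
          rw [abs_mul]; norm_num
      _ ≤ 2 * (‖φ y‖ * ‖deriv φ y‖) := by nlinarith
  -- integrability of ‖φ‖² + ‖φ'‖²
  have hint_sq : ∀ (ψ : ℝ → ℂ), MemLp ψ 2 (volume : Measure ℝ) →
      Integrable (fun y => ‖ψ y‖ ^ 2) := by
    intro ψ hψ
    have := hψ.integrable_norm_rpow (by norm_num) (by norm_num)
    have h2 : ENNReal.toReal 2 = (2 : ℝ) := by norm_num
    rw [h2] at this
    refine this.congr (Filter.Eventually.of_forall fun y => ?_)
    simp [Real.rpow_two]
  have hE0 : Integrable (fun y => ‖φ y‖ ^ 2 + ‖deriv φ y‖ ^ 2) :=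
    (hint_sq φ hφL2).add (hint_sq (deriv φ) hφ'L2)
  -- D is integrable
  have hDc : Continuous D := continuous_const.mul (hφc.norm.mul hφ'c.norm)
  have hDint : Integrable D := by
    refine hE0.mono' hDc.aestronglyMeasurable (Filter.Eventually.of_forall fun y => ?_)
    rw [Real.norm_of_nonneg (hDnonneg y)]
    show 2 * (‖φ y‖ * ‖deriv φ y‖) ≤ ‖φ y‖ ^ 2 + ‖deriv φ y‖ ^ 2
    nlinarith [two_mul_le_add_sq ‖φ y‖ ‖deriv φ y‖]
  -- g' is integrable
  have hg'int : Integrable g' := by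
    refine hDint.mono' hg'c.aestronglyMeasurable (Filter.Eventually.of_forall fun y => ?_)
    exact (Real.norm_eq_abs _).le.trans_eq' rfl |>.trans (hg'le y)
  -- the weighted dominating function B
  set B : ℝ → ℝ := fun y => F y ^ 2 * D y with hBdef
  have hBnonneg : ∀ y, 0 ≤ B y := fun y => mul_nonneg (by positivity) (hDnonneg y)
  have hM0 : 0 ≤ M := (hFnonneg 0).trans (hM 0)
  have hBint : Integrable B := by
    have hBmeas : AEStronglyMeasurable B volume :=
      ((hFmeas.pow_const 2).mul hDc.measurable).aestronglyMeasurable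
    refine (hDint.const_mul (M ^ 2)).mono' hBmeas
      (Filter.Eventually.of_forall fun y => ?_)
    rw [Real.norm_of_nonneg (hBnonneg y)]
    have hF2 : F y ^ 2 ≤ M ^ 2 := pow_le_pow_left₀ (hFnonneg y) (hM y) 2
    exact mul_le_mul_of_nonneg_right hF2 (hDnonneg y)
  -- limits of g at ±∞
  have hcc : Tendsto φ (atBot ⊔ atTop) (nhds 0) := by
    rwa [cocompact_eq_atBot_atTop] at hφ0
  have hgtend : ∀ l : Filter ℝ, Tendsto φ l (nhds 0) → Tendsto g l (nhds 0) := by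
    intro l hl
    have : Tendsto g l (nhds (‖(0:ℂ)‖ ^ 2)) := (hl.norm).pow 2
    simpa using this
  have hgtop : Tendsto g atTop (nhds 0) := hgtend _ (hcc.mono_left le_sup_right)
  have hgbot : Tendsto g atBot (nhds 0) := hgtend _ (hcc.mono_left le_sup_left)
  -- pointwise bound by ∫ B
  have hkey : ∀ x : ℝ, F x ^ 2 * ‖φ x‖ ^ 2 ≤ ∫ y, B y := by
    intro x
    have hpt : F x ^ 2 * g x ≤ ∫ y, B y := by
      rcases le_or_gt 0 x with hx | hx
      · -- x ≥ 0 : integrate over (x, ∞)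
        have hftc : ∫ y in Set.Ioi x, g' y = 0 - g x :=
          integral_Ioi_of_hasDerivAt_of_tendsto' (fun y _ => hg y)
            hg'int.integrableOn hgtop
        have hgx : g x = ∫ y in Set.Ioi x, -g' y := by
          rw [integral_neg, hftc]; ring
        calc F x ^ 2 * g x = ∫ y in Set.Ioi x, F x ^ 2 * (-g' y) := by
              rw [hgx, ← integral_const_mul]
          _ ≤ ∫ y in Set.Ioi x, B y := by
              refine setIntegral_mono_on
                ((hg'int.neg.const_mul _).integrableOn) hBint.integrableOn
                measurableSet_Ioi (fun y hy => ?_)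
              have hFy : F x ≤ F y :=
                hFmono hx (hx.trans (le_of_lt hy)) (le_of_lt hy)
              have h1 : -g' y ≤ D y := (neg_le_abs _).trans (hg'le y)
              have h2 : F x ^ 2 ≤ F y ^ 2 := pow_le_pow_left₀ (hFnonneg x) hFy 2
              calc F x ^ 2 * (-g' y) ≤ F x ^ 2 * D y :=
                    mul_le_mul_of_nonneg_left h1 (by positivity)
                _ ≤ F y ^ 2 * D y := mul_le_mul_of_nonneg_right h2 (hDnonneg y)
          _ ≤ ∫ y, B y := setIntegral_le_integral hBint
              (Filter.Eventually.of_forall hBnonneg)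
      · -- x < 0 : integrate over (-∞, x]
        have hftc : ∫ y in Set.Iic x, g' y = g x - 0 :=
          integral_Iic_of_hasDerivAt_of_tendsto' (fun y _ => hg y)
            hg'int.integrableOn hgbot
        have hgx : g x = ∫ y in Set.Iic x, g' y := by rw [hftc, sub_zero]
        calc F x ^ 2 * g x = ∫ y in Set.Iic x, F x ^ 2 * g' y := by
              rw [hgx, ← integral_const_mul]
          _ ≤ ∫ y in Set.Iic x, B y := by
              refine setIntegral_mono_on
                ((hg'int.const_mul _).integrableOn) hBint.integrableOn
                measurableSet_Iic (fun y hy => ?_)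
              have hyx : y ≤ x := hy
              have hFy : F x ≤ F y := by
                rw [← hFeven x, ← hFeven y]
                exact hFmono (by linarith : (0:ℝ) ≤ -x) (by linarith : (0:ℝ) ≤ -y)
                  (by linarith)
              have h1 : g' y ≤ D y := (le_abs_self _).trans (hg'le y)
              have h2 : F x ^ 2 ≤ F y ^ 2 := pow_le_pow_left₀ (hFnonneg x) hFy 2
              calc F x ^ 2 * g' y ≤ F x ^ 2 * D y :=
                    mul_le_mul_of_nonneg_left h1 (by positivity)
                _ ≤ F y ^ 2 * D y := mul_le_mul_of_nonneg_right h2 (hDnonneg y)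
          _ ≤ ∫ y, B y := setIntegral_le_integral hBint
              (Filter.Eventually.of_forall hBnonneg)
    exact hpt
  -- Hölder's inequality
  set u : ℝ → ℝ := fun y => F y * ‖deriv φ y‖ with hudef
  set v : ℝ → ℝ := fun y => F y * ‖φ y‖ with hvdef
  have hFtop : MemLp F ⊤ (volume : Measure ℝ) :=
    memLp_top_of_bound hFmeas.aestronglyMeasurable M
      (Filter.Eventually.of_forall fun y => by
        rw [Real.norm_of_nonneg (hFnonneg y)]; exact hM y)
  have hsmul : ∀ (ψ : ℝ → ℂ), MemLp ψ 2 (volume : Measure ℝ) →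
      MemLp (fun y => (F y : ℂ) * ψ y) 2 (volume : Measure ℝ) := by
    intro ψ hψ
    have h : MemLp (F • ψ) 2 volume := hψ.smul hFtop
    have heq : (F • ψ) =ᵐ[volume] fun y => (F y : ℂ) * ψ y :=
      Filter.Eventually.of_forall fun y => by
        simp [Pi.smul_apply', Complex.real_smul]
    exact h.ae_eq heq
  have hFφ' := hsmul _ hφ'L2
  have hFφ := hsmul _ hφL2
  have hnormeq : ∀ (ψ : ℝ → ℂ) (y : ℝ), ‖(F y : ℂ) * ψ y‖ = F y * ‖ψ y‖ := by
    intro ψ y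
    rw [norm_mul, Complex.norm_real, Real.norm_of_nonneg (hFnonneg y)]
  have hu2 : MemLp u 2 (volume : Measure ℝ) :=
    hFφ'.norm.ae_eq (Filter.Eventually.of_forall fun y => hnormeq _ y)
  have hv2 : MemLp v 2 (volume : Measure ℝ) :=
    hFφ.norm.ae_eq (Filter.Eventually.of_forall fun y => hnormeq _ y)
  have hconj : Real.HolderConjugate 2 2 := Real.HolderConjugate.two_two
  have h2 : (ENNReal.ofReal 2) = (2 : ENNReal) := by
    rw [ENNReal.ofReal_ofNat]
  have hHolder : ∫ y, u y * v y ≤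
      (∫ y, u y ^ (2:ℝ)) ^ (1/(2:ℝ)) * (∫ y, v y ^ (2:ℝ)) ^ (1/(2:ℝ)) := by
    refine integral_mul_le_Lp_mul_Lq_of_nonneg hconj
      (Filter.Eventually.of_forall fun y => mul_nonneg (hFnonneg y) (norm_nonneg _))
      (Filter.Eventually.of_forall fun y => mul_nonneg (hFnonneg y) (norm_nonneg _))
      ?_ ?_
    · rwa [h2]
    · rwa [h2]
  -- identify the right-hand side with the L² norms
  have hL2u : L2norm (fun y => (F y : ℂ) * deriv φ y) = (∫ y, u y ^ (2:ℝ)) ^ (1/(2:ℝ)) := by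
    rw [L2norm, Real.sqrt_eq_rpow]
    congr 1
    refine integral_congr_ae (Filter.Eventually.of_forall fun y => ?_)
    show ‖(F y : ℂ) * deriv φ y‖ ^ 2 = (F y * ‖deriv φ y‖) ^ (2:ℝ)
    rw [Real.rpow_two, hnormeq _ y]
  have hL2v : L2norm (fun y => (F y : ℂ) * φ y) = (∫ y, v y ^ (2:ℝ)) ^ (1/(2:ℝ)) := by
    rw [L2norm, Real.sqrt_eq_rpow]
    congr 1
    refine integral_congr_ae (Filter.Eventually.of_forall fun y => ?_)
    show ‖(F y : ℂ) * φ y‖ ^ 2 = (F y * ‖φ y‖) ^ (2:ℝ)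
    rw [Real.rpow_two, hnormeq _ y]
  have hBrw : ∫ y, B y = 2 * ∫ y, u y * v y := by
    rw [← integral_const_mul]
    refine integral_congr_ae (Filter.Eventually.of_forall fun y => ?_)
    show F y ^ 2 * (2 * (‖φ y‖ * ‖deriv φ y‖)) = 2 * (F y * ‖deriv φ y‖ * (F y * ‖φ y‖))
    ring
  have hfinal : ∫ y, B y ≤
      2 * L2norm (fun y => (F y : ℂ) * deriv φ y) * L2norm (fun y => (F y : ℂ) * φ y) := by
    rw [hBrw, hL2u, hL2v, mul_assoc]
    exact mul_le_mul_of_nonneg_left hHolder (by norm_num)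
  have hmain : ∀ x : ℝ, F x ^ 2 * ‖φ x‖ ^ 2 ≤
      2 * L2norm (fun y => (F y : ℂ) * deriv φ y) * L2norm (fun y => (F y : ℂ) * φ y) :=
    fun x => (hkey x).trans hfinal
  exact ⟨hmain, ciSup_le hmain⟩
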